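/- Let M be a countable coarse group satisfying the negative-expression axiom and the coset-recognition axiom, and such that the product of full filters is associative. Then the Polish group F(M) is compact if and only if both: for every *subgroup U there is a *subgroup V with V ⊑ U and LC(V) = RC(V), and for every *subgroup U the set LC(U) is finite. -/

import Mathlib

/-! Abstract coarse groups (Nies–Schlicht–Tent). -/

namespace CoarsePaper

/-- A structure with one ternary relation `rel A B C`, read "AB ⊑ C". -/
structure CG (M : Type) : Type where
  rel : M → M → M → Prop

variable {M : Type}

/-- `U` is a *subgroup: `UU ⊑ U`. -/
def IsSub (c : CG M) (U : M) : Prop := c.rel U U U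

/-- For *subgroups, `U ⊑ V` means `UV ⊑ V`. -/
def sle (c : CG M) (U V : M) : Prop := c.rel U V V

/-- `A ∈ LC(U)`: `U` is the ⊑-maximum *subgroup with `AU ⊑ A`. -/
def LC (c : CG M) (U A : M) : Prop :=
  IsSub c U ∧ c.rel A U A ∧ ∀ V, IsSub c V → c.rel A V A → sle c V U

/-- `A ∈ RC(U)`: `U` is the ⊑-maximum *subgroup with `UA ⊑ A`. -/
def RC (c : CG M) (U A : M) : Prop :=
  IsSub c U ∧ c.rel U A A ∧ ∀ V, IsSub c V → c.rel V A A → sle c V U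

/-- `A ⊑ B` for arbitrary elements: `AU ⊑ B` for some *subgroup `U` with `A ∈ LC(U)`. -/
def cle (c : CG M) (A B : M) : Prop := ∃ U, LC c U A ∧ c.rel A U B

/-- `A`, `B` are disjoint: there are no `C`, `D` with `CD ⊑ A` and `CD ⊑ B`. -/
def Disj (c : CG M) (A B : M) : Prop := ¬ ∃ C D, c.rel C D A ∧ c.rel C D B

/-- `S(A,B)`: there is a *subgroup `V` with `A ∈ RC(V)`, `B ∈ LC(V)`, `AB ⊑ V`;
we then write `B = A⋄`. -/
def Srel (c : CG M) (A B : M) : Prop :=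
  ∃ V, RC c V A ∧ LC c V B ∧ c.rel A B V

/-- The axioms of a coarse group. -/
structure Axioms (c : CG M) : Prop where
  -- (0a) ⊑ is a partial order on *subgroups in which any two elements have a meet
  sle_refl : ∀ U, IsSub c U → sle c U U
  sle_antisymm : ∀ U V, IsSub c U → IsSub c V → sle c U V → sle c V U → U = V
  sle_trans : ∀ U V W, IsSub c U → IsSub c V → IsSub c W → sle c U V → sle c V W → sle c U W
  meet : ∀ U V, IsSub c U → IsSub c V → ∃ W, IsSub c W ∧ sle c W U ∧ sle c W V ∧
    ∀ T, IsSub c T → sle c T U → sle c T V → sle c T W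
  -- (0b) every element is a left *coset and a right *coset of some *subgroup
  exists_lc : ∀ A, ∃ U, LC c U A
  exists_rc : ∀ A, ∃ U, RC c U A
  -- (0c) ⊑ is a partial order on M extending ⊑ on *subgroups
  cle_refl : ∀ A, cle c A A
  cle_antisymm : ∀ A B, cle c A B → cle c B A → A = B
  cle_trans : ∀ A B C, cle c A B → cle c B C → cle c A C
  cle_ext : ∀ U V, IsSub c U → IsSub c V → (cle c U V ↔ sle c U V)
  -- (1)
  lc_up : ∀ U' U A', IsSub c U' → IsSub c U → sle c U' U → LC c U' A' →
    ∃ A, LC c U A ∧ cle c A' A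
  lc_disj : ∀ U' U A' A, IsSub c U' → IsSub c U → sle c U' U → LC c U' A' → LC c U A →
    cle c A' A ∨ Disj c A' A
  rc_up : ∀ U' U A', IsSub c U' → IsSub c U → sle c U' U → RC c U' A' →
    ∃ A, RC c U A ∧ cle c A' A
  rc_disj : ∀ U' U A' A, IsSub c U' → IsSub c U → sle c U' U → RC c U' A' → RC c U A →
    cle c A' A ∨ Disj c A' A
  -- (2) monotonicity
  mono : ∀ A₀ A₁ B₀ B₁ C, c.rel B₀ B₁ C → cle c A₀ B₀ → cle c A₁ B₁ → c.rel A₀ A₁ C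
  -- (3)
  lc_sub_iff : ∀ U V B, IsSub c U → IsSub c V → LC c V B →
    (sle c U V ↔ ∃ A, LC c U A ∧ cle c A B)
  rc_sub_iff : ∀ U V B, IsSub c U → IsSub c V → RC c V B →
    (sle c U V ↔ ∃ A, RC c U A ∧ cle c A B)
  -- (4) inverses
  srel_existsUnique : ∀ A, ∃! B, Srel c A B
  srel_symm : ∀ A B, Srel c A B → Srel c B A
  srel_orderIso : ∀ A B A' B', Srel c A A' → Srel c B B' → (cle c A B ↔ cle c A' B')
  -- (5) products of compatible *cosets
  prod_exists : ∀ U V W A B, RC c U A → LC c V A → RC c V B → LC c W B →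
    ∃ C, RC c U C ∧ LC c W C ∧ c.rel A B C ∧ ∀ D, c.rel A B D → cle c C D

/-- A full filter on `M`. -/
structure FullFilter (c : CG M) (x : Set M) : Prop where
  up : ∀ A ∈ x, ∀ B, cle c A B → B ∈ x
  directed : ∀ A ∈ x, ∀ B ∈ x, ∃ C ∈ x, cle c C A ∧ cle c C B
  lc_mem : ∀ U, IsSub c U → ∃ A ∈ x, LC c U A
  rc_mem : ∀ U, IsSub c U → ∃ A ∈ x, RC c U A

/-- The product of two filters: `x·y = {C : ∃ A ∈ x, B ∈ y, AB ⊑ C}`. -/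
def fprod (c : CG M) (x y : Set M) : Set M :=
  {C | ∃ A ∈ x, ∃ B ∈ y, c.rel A B C}

/-- The inverse of a filter: `x⁻¹ = {A⋄ : A ∈ x}`. -/
def finv (c : CG M) (x : Set M) : Set M :=
  {B | ∃ A ∈ x, Srel c A B}

/-- The identity filter: generated by the *subgroups. -/
def fone (c : CG M) : Set M := {C | ∃ U, IsSub c U ∧ cle c U C}

/-- The space `F(M)` of full filters on `M`. -/
abbrev FF (c : CG M) : Type := {x : Set M // FullFilter c x}

/-- The topology on `F(M)` generated by the sets `Â = {x : A ∈ x}`. -/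
def ffTop (c : CG M) : TopologicalSpace (FF c) :=
  TopologicalSpace.generateFrom {S | ∃ A : M, S = {x : FF c | A ∈ x.1}}

/-- `Â`, as a collection of subsets of `M`: the full filters containing `A`. -/
def hatS (c : CG M) (A : M) : Set (Set M) := {x | FullFilter c x ∧ A ∈ x}

/-- Associativity of the product of full filters. -/
def FAssoc (c : CG M) : Prop :=
  ∀ x y z : Set M, FullFilter c x → FullFilter c y → FullFilter c z →
    fprod c (fprod c x y) z = fprod c x (fprod c y z)

/-- The negative-expression axiom. -/
structure NegAx (c : CG M) : Prop where
  rel_iff : ∀ A B C, c.rel A B C ↔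
    ¬ ∃ D E F, cle c D A ∧ cle c E B ∧ c.rel D E F ∧ Disj c C F
  le_iff : ∀ A B, cle c A B ↔ ¬ ∃ C, cle c C A ∧ Disj c B C

/-- The action of a filter on a *coset: `x·A = B` iff `SA ⊑ B` for some `S ∈ x`. -/
def act (c : CG M) (x : Set M) (A B : M) : Prop := ∃ S ∈ x, c.rel S A B

/-- `𝒱 ⊆ F(M)` is a subgroup of the filter group `F(M)`. -/
def IsSubgroupFF (c : CG M) (V : Set (FF c)) : Prop :=
  (∀ z : FF c, z.1 = fone c → z ∈ V) ∧
  (∀ u ∈ V, ∀ v ∈ V, ∀ w : FF c, w.1 = fprod c u.1 v.1 → w ∈ V) ∧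
  (∀ u ∈ V, ∀ w : FF c, w.1 = finv c u.1 → w ∈ V)

/-- The union of double cosets `⋃_{i<n} V̂·Â_i`, as a collection of subsets of `M`
(the underlying sets of the full filters belonging to it). -/
def doubleUnion (c : CG M) (V : M) {n : ℕ} (A : Fin n → M) : Set (Set M) :=
  {z | ∃ i : Fin n, ∃ u v : Set M, FullFilter c u ∧ FullFilter c v ∧ V ∈ u ∧ A i ∈ v ∧
    z = fprod c u v}

/-- The coset-recognition axiom. -/
def CosetRec (c : CG M) : Prop :=
  ∀ V, IsSub c V → ∀ n : ℕ, 1 ≤ n → ∀ A : Fin n → M, (∀ i, LC c V (A i)) →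
    (fone c ∈ doubleUnion c V A ∧
     (∀ p ∈ doubleUnion c V A, ∀ q ∈ doubleUnion c V A, fprod c p q ∈ doubleUnion c V A) ∧
     (∀ p ∈ doubleUnion c V A, finv c p ∈ doubleUnion c V A)) →
    ∃ U, IsSub c U ∧ (∀ i, c.rel V (A i) U) ∧
      ∀ z : Set M, FullFilter c z → U ∈ z → z ∈ doubleUnion c V A

/-- Roelcke precompactness of the filter group `F(M)`: every open neighbourhood `𝒰` of the
identity satisfies `F(M) = 𝒰·F·𝒰` for some finite `F`. -/
def RoelckeFF (c : CG M) : Prop :=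
  ∀ U : Set (FF c), @IsOpen (FF c) (ffTop c) U → (∀ z : FF c, z.1 = fone c → z ∈ U) →
    ∃ F : Set (FF c), F.Finite ∧
      ∀ z : FF c, ∃ u ∈ U, ∃ f ∈ F, ∃ v ∈ U, z.1 = fprod c (fprod c u.1 f.1) v.1


set_option linter.unusedSectionVars false
/-! ### Auxiliary development -/

section Aux

variable {c : CG M}


lemma lc_unique (ax : Axioms c) {U V A : M} (h1 : LC c U A) (h2 : LC c V A) : U = V :=
  ax.sle_antisymm U V h1.1 h2.1 (h2.2.2 U h1.1 h1.2.1) (h1.2.2 V h2.1 h2.2.1)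

lemma rc_unique (ax : Axioms c) {U V A : M} (h1 : RC c U A) (h2 : RC c V A) : U = V :=
  ax.sle_antisymm U V h1.1 h2.1 (h2.2.2 U h1.1 h1.2.1) (h1.2.2 V h2.1 h2.2.1)

lemma mem_nondisj (ax : Axioms c) {x : Set M} (hx : FullFilter c x) {A B : M}
    (hA : A ∈ x) (hB : B ∈ x) : ¬ Disj c A B := by
  obtain ⟨D, hD, hDA, hDB⟩ := hx.directed A hA B hB
  obtain ⟨W1, hW1, hrel1⟩ := hDA
  obtain ⟨W2, hW2, hrel2⟩ := hDB
  have : W1 = W2 := lc_unique ax hW1 hW2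
  subst this
  exact fun h => h ⟨D, W1, hrel1, hrel2⟩

/-- Coherence of left cosets inside a full filter. -/
lemma lc_coh (ax : Axioms c) {x : Set M} (hx : FullFilter c x) {U W A B : M}
    (hA : A ∈ x) (hB : B ∈ x) (hLA : LC c U A) (hLB : LC c W B) (hWU : sle c W U) :
    cle c B A := by
  rcases ax.lc_disj W U B A hLB.1 hLA.1 hWU hLB hLA with h | h
  · exact h
  · exact absurd h (mem_nondisj ax hx hB hA)

lemma rc_coh (ax : Axioms c) {x : Set M} (hx : FullFilter c x) {U W A B : M}
    (hA : A ∈ x) (hB : B ∈ x) (hRA : RC c U A) (hRB : RC c W B) (hWU : sle c W U) :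
    cle c B A := by
  rcases ax.rc_disj W U B A hRB.1 hRA.1 hWU hRB hRA with h | h
  · exact h
  · exact absurd h (mem_nondisj ax hx hB hA)

/-- In a full filter there is a unique left *coset of each *subgroup. -/
lemma lc_mem_unique (ax : Axioms c) {x : Set M} (hx : FullFilter c x) {U A B : M}
    (hA : A ∈ x) (hB : B ∈ x) (hLA : LC c U A) (hLB : LC c U B) : A = B :=
  ax.cle_antisymm A B (lc_coh ax hx hB hA hLB hLA (ax.sle_refl U hLA.1))
    (lc_coh ax hx hA hB hLA hLB (ax.sle_refl U hLA.1))

/-- Every element belongs to some full filter (needs countability). -/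
lemma exists_fullFilter (ax : Axioms c) [Countable M] (A : M) :
    ∃ x : Set M, FullFilter c x ∧ A ∈ x := by
  classical
  -- a surjective enumeration of the *subgroups
  have hne : Nonempty {U : M // IsSub c U} := by
    obtain ⟨U, hU⟩ := ax.exists_lc A
    exact ⟨⟨U, hU.1⟩⟩
  obtain ⟨e, he⟩ := exists_surjective_nat {U : M // IsSub c U}
  -- one refinement step towards the subgroup V
  have step : ∀ B V, IsSub c V → ∃ p : M × M,
      (∃ W1, IsSub c W1 ∧ sle c W1 V ∧ LC c W1 p.1) ∧ cle c p.1 B ∧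
      (∃ W2, IsSub c W2 ∧ sle c W2 V ∧ RC c W2 p.2) ∧ cle c p.2 p.1 := by
    intro B V hV
    obtain ⟨S, hS⟩ := ax.exists_lc B
    obtain ⟨W1, hW1, hW1S, hW1V, -⟩ := ax.meet S V hS.1 hV
    obtain ⟨B1, hB1, hB1B⟩ := (ax.lc_sub_iff W1 S B hW1 hS.1 hS).mp hW1S
    obtain ⟨T, hT⟩ := ax.exists_rc B1
    obtain ⟨W2, hW2, hW2T, hW2V, -⟩ := ax.meet T V hT.1 hV
    obtain ⟨B2, hB2, hB2B1⟩ := (ax.rc_sub_iff W2 T B1 hW2 hT.1 hT).mp hW2T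
    exact ⟨(B1, B2), ⟨W1, hW1, hW1V, hB1⟩, hB1B, ⟨W2, hW2, hW2V, hB2⟩, hB2B1⟩
  -- the decreasing chain
  let F : ℕ → M → M := fun n B => (Classical.choose (step B (e n).1 (e n).2)).2
  let seq : ℕ → M := fun n => Nat.rec A (fun n B => F n B) n
  have seq_succ : ∀ n, seq (n+1) = F n (seq n) := fun n => rfl
  have desc : ∀ n, cle c (seq (n+1)) (seq n) := by
    intro n
    obtain ⟨-, h1, -, h2⟩ := Classical.choose_spec (step (seq n) (e n).1 (e n).2)
    exact ax.cle_trans _ _ _ h2 h1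
  have mono : ∀ m n, n ≤ m → cle c (seq m) (seq n) := by
    intro m
    induction m with
    | zero => intro n hn; simp at hn; subst hn; exact ax.cle_refl _
    | succ k ih =>
      intro n hn
      rcases Nat.lt_or_ge n (k+1) with h | h
      · exact ax.cle_trans _ _ _ (desc k) (ih n (Nat.lt_succ_iff.mp h))
      · have : n = k + 1 := le_antisymm hn h
        subst this; exact ax.cle_refl _
  refine ⟨{C | ∃ n, cle c (seq n) C}, ⟨?_, ?_, ?_, ?_⟩, ⟨0, ax.cle_refl A⟩⟩
  · rintro B ⟨n, hn⟩ C hBC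
    exact ⟨n, ax.cle_trans _ _ _ hn hBC⟩
  · rintro B ⟨n, hn⟩ C ⟨m, hm⟩
    refine ⟨seq (max n m), ⟨max n m, ax.cle_refl _⟩, ?_, ?_⟩
    · exact ax.cle_trans _ _ _ (mono _ _ (le_max_left n m)) hn
    · exact ax.cle_trans _ _ _ (mono _ _ (le_max_right n m)) hm
  · intro U hU
    obtain ⟨n, hn⟩ := he ⟨U, hU⟩
    obtain ⟨⟨W1, hW1, hW1V, hB1⟩, -, ⟨W2, hW2, hW2V, hB2⟩, h21⟩ :=
      Classical.choose_spec (step (seq n) (e n).1 (e n).2)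
    rw [hn] at hW1V hW2V
    obtain ⟨A', hA', hA'up⟩ := ax.lc_up W1 U _ hW1 hU hW1V hB1
    refine ⟨A', ⟨n+1, ?_⟩, hA'⟩
    exact ax.cle_trans _ _ _ h21 hA'up
  · intro U hU
    obtain ⟨n, hn⟩ := he ⟨U, hU⟩
    obtain ⟨-, -, ⟨W2, hW2, hW2V, hB2⟩, -⟩ :=
      Classical.choose_spec (step (seq n) (e n).1 (e n).2)
    rw [hn] at hW2V
    obtain ⟨A', hA', hA'up⟩ := ax.rc_up W2 U _ hW2 hU hW2V hB2
    exact ⟨A', ⟨n+1, hA'up⟩, hA'⟩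

end Aux

section Aux2

variable {c : CG M} [Countable M]

/-- Non-disjoint elements lie in a common full filter. -/
lemma nondisj_filter (ax : Axioms c) {A B : M} (h : ¬ Disj c A B) :
    ∃ x : Set M, FullFilter c x ∧ A ∈ x ∧ B ∈ x := by
  rw [Disj, not_not] at h
  obtain ⟨P, Q, hPA, hPB⟩ := h
  obtain ⟨VP, hVP⟩ := ax.exists_lc P
  obtain ⟨VQ, hVQ⟩ := ax.exists_rc Q
  obtain ⟨W, hW, hWP, hWQ, -⟩ := ax.meet VP VQ hVP.1 hVQ.1
  obtain ⟨P', hP', hP'P⟩ := (ax.lc_sub_iff W VP P hW hVP.1 hVP).mp hWP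
  obtain ⟨Q', hQ', hQ'Q⟩ := (ax.rc_sub_iff W VQ Q hW hVQ.1 hVQ).mp hWQ
  have hA' : c.rel P' Q' A := ax.mono P' Q' P Q A hPA hP'P hQ'Q
  have hB' : c.rel P' Q' B := ax.mono P' Q' P Q B hPB hP'P hQ'Q
  obtain ⟨U', hU'⟩ := ax.exists_rc P'
  obtain ⟨W', hW'⟩ := ax.exists_lc Q'
  obtain ⟨C, -, -, hCrel, hCmin⟩ := ax.prod_exists U' W W' P' Q' hU' hP' hQ' hW'
  obtain ⟨x, hx, hCx⟩ := exists_fullFilter ax C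
  exact ⟨x, hx, hx.up C hCx A (hCmin A hA'), hx.up C hCx B (hCmin B hB')⟩

/-- The relation `AB ⊑ C` is upward closed in `C`. -/
lemma rel_up (ax : Axioms c) (nax : NegAx c) {A B C C' : M}
    (h : c.rel A B C) (hCC' : cle c C C') : c.rel A B C' := by
  rw [nax.rel_iff]
  rintro ⟨D, E, F, hDA, hEB, hDEF, hdisj⟩
  have h1 : ¬ Disj c C F := by
    have := (nax.rel_iff A B C).mp h
    exact fun hd => this ⟨D, E, F, hDA, hEB, hDEF, hd⟩
  obtain ⟨x, hx, hCx, hFx⟩ := nondisj_filter ax h1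
  exact (mem_nondisj ax hx (hx.up C hCx C' hCC') hFx) hdisj

/-- If every full filter containing `V` contains `U`, then `V ⊑ U`. -/
lemma sle_of_hat_subset (ax : Axioms c) (nax : NegAx c) {V U : M}
    (hV : IsSub c V) (hU : IsSub c U)
    (h : ∀ x : Set M, FullFilter c x → V ∈ x → U ∈ x) : sle c V U := by
  rw [← ax.cle_ext V U hV hU, nax.le_iff]
  rintro ⟨C, hCV, hdisj⟩
  obtain ⟨x, hx, hCx⟩ := exists_fullFilter ax C
  have hVx : V ∈ x := hx.up C hCx V hCV
  exact (mem_nondisj ax hx (h x hx hVx) hCx) hdisj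

/-- The inverse `A⋄`. -/
noncomputable def dia (ax : Axioms c) (A : M) : M :=
  Classical.choose (ax.srel_existsUnique A).exists

lemma srel_dia (ax : Axioms c) (A : M) : Srel c A (dia ax A) :=
  Classical.choose_spec (ax.srel_existsUnique A).exists

lemma dia_eq (ax : Axioms c) {A B : M} (h : Srel c A B) : B = dia ax A :=
  (ax.srel_existsUnique A).unique h (srel_dia ax A)

lemma srel_dia' (ax : Axioms c) (A : M) : Srel c (dia ax A) A :=
  ax.srel_symm _ _ (srel_dia ax A)

lemma dia_dia (ax : Axioms c) (A : M) : dia ax (dia ax A) = A :=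
  (dia_eq ax (srel_dia' ax A)).symm

lemma dia_cle (ax : Axioms c) {A B : M} (h : cle c A B) :
    cle c (dia ax A) (dia ax B) :=
  (ax.srel_orderIso A B (dia ax A) (dia ax B) (srel_dia ax A) (srel_dia ax B)).mp h

/-- If `A ∈ RC(S)` then `A⋄ ∈ LC(S)` and `A·A⋄ ⊑ S`. -/
lemma dia_lc (ax : Axioms c) {S A : M} (hS : RC c S A) : LC c S (dia ax A) := by
  obtain ⟨V, hV, hL, -⟩ := srel_dia ax A
  rwa [rc_unique ax hV hS] at hL

lemma rel_dia (ax : Axioms c) {S A : M} (hS : RC c S A) : c.rel A (dia ax A) S := by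
  obtain ⟨V, hV, -, hr⟩ := srel_dia ax A
  rwa [rc_unique ax hV hS] at hr

/-- If `A ∈ LC(T)` then `A⋄ ∈ RC(T)` and `A⋄·A ⊑ T`. -/
lemma dia_rc (ax : Axioms c) {T A : M} (hT : LC c T A) : RC c T (dia ax A) := by
  obtain ⟨V, hV, hL, -⟩ := srel_dia' ax A
  rwa [lc_unique ax hL hT] at hV

lemma rel_dia' (ax : Axioms c) {T A : M} (hT : LC c T A) : c.rel (dia ax A) A T := by
  obtain ⟨V, hV, hL, hr⟩ := srel_dia' ax A
  rwa [lc_unique ax hL hT] at hr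

/-- An element which is a right *coset of `T` and lies below `T` is a *subgroup. -/
lemma isSub_of_rc_cle (ax : Axioms c) (nax : NegAx c) {T C : M}
    (hRC : RC c T C) (hCT : cle c C T) : IsSub c C := by
  rw [IsSub, nax.rel_iff]
  rintro ⟨D, E, F, hDC, hEC, hDEF, hdisj⟩
  have hDT : cle c D T := ax.cle_trans _ _ _ hDC hCT
  have : c.rel D E C := ax.mono D E T C C hRC.2.1 hDT hEC
  exact hdisj ⟨D, E, this, hDEF⟩

/-- The "identity" left-and-right *coset of a *subgroup `U`. -/
lemma exists_idCoset (ax : Axioms c) (nax : NegAx c) {U : M} (hU : IsSub c U) :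
    ∃ C, IsSub c C ∧ LC c U C ∧ RC c U C ∧ cle c C U ∧ Srel c C C := by
  obtain ⟨x, hx, -⟩ := exists_fullFilter ax U
  obtain ⟨A, -, hA⟩ := hx.lc_mem U hU
  obtain ⟨S, hS⟩ := ax.exists_rc A
  set B := dia ax A with hB
  have hLB : LC c S B := dia_lc ax hS
  have hRB : RC c U B := dia_rc ax hA
  have hrelBA : c.rel B A U := rel_dia' ax hA
  obtain ⟨C, hRC, hLC, hrel, hmin⟩ := ax.prod_exists U S U B A hRB hLB hS hA
  have hCU : cle c C U := hmin U hrelBA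
  have hsub : IsSub c C := isSub_of_rc_cle ax nax hRC hCU
  exact ⟨C, hsub, hLC, hRC, hCU, U, hRC, hLC, rel_up ax nax hsub hCU⟩

end Aux2

section Aux3

set_option linter.unusedSectionVars false

variable {c : CG M} [Countable M]

lemma fone_full (ax : Axioms c) (nax : NegAx c) : FullFilter c (fone c) := by
  constructor
  · rintro A ⟨U, hU, hUA⟩ B hAB
    exact ⟨U, hU, ax.cle_trans _ _ _ hUA hAB⟩
  · rintro A ⟨U, hU, hUA⟩ B ⟨V, hV, hVB⟩
    obtain ⟨W, hW, hWU, hWV, -⟩ := ax.meet U V hU hV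
    refine ⟨W, ⟨W, hW, ax.cle_refl W⟩, ?_, ?_⟩
    · exact ax.cle_trans _ _ _ ((ax.cle_ext W U hW hU).mpr hWU) hUA
    · exact ax.cle_trans _ _ _ ((ax.cle_ext W V hW hV).mpr hWV) hVB
  · intro U hU
    obtain ⟨C, hCsub, hLC, -, -, -⟩ := exists_idCoset ax nax hU
    exact ⟨C, ⟨C, hCsub, ax.cle_refl C⟩, hLC⟩
  · intro U hU
    obtain ⟨C, hCsub, -, hRC, -, -⟩ := exists_idCoset ax nax hU
    exact ⟨C, ⟨C, hCsub, ax.cle_refl C⟩, hRC⟩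

lemma fprod_full (ax : Axioms c) (nax : NegAx c) {x y : Set M}
    (hx : FullFilter c x) (hy : FullFilter c y) : FullFilter c (fprod c x y) := by
  constructor
  · rintro C ⟨A, hA, B, hB, hrel⟩ C' hCC'
    exact ⟨A, hA, B, hB, rel_up ax nax hrel hCC'⟩
  · rintro C1 ⟨A1, hA1, B1, hB1, hrel1⟩ C2 ⟨A2, hA2, B2, hB2, hrel2⟩
    obtain ⟨A, hA, hAA1, hAA2⟩ := hx.directed A1 hA1 A2 hA2
    obtain ⟨B, hB, hBB1, hBB2⟩ := hy.directed B1 hB1 B2 hB2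
    obtain ⟨VA, hVA⟩ := ax.exists_lc A
    obtain ⟨VB, hVB⟩ := ax.exists_rc B
    obtain ⟨W, hW, hWA, hWB, -⟩ := ax.meet VA VB hVA.1 hVB.1
    obtain ⟨As, hAs, hAsW⟩ := hx.lc_mem W hW
    obtain ⟨Bs, hBs, hBsW⟩ := hy.rc_mem W hW
    have hAsA : cle c As A := lc_coh ax hx hA hAs hVA hAsW hWA
    have hBsB : cle c Bs B := rc_coh ax hy hB hBs hVB hBsW hWB
    obtain ⟨Us, hUs⟩ := ax.exists_rc As
    obtain ⟨Ws, hWs⟩ := ax.exists_lc Bs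
    obtain ⟨Cs, -, -, hCrel, hCmin⟩ := ax.prod_exists Us W Ws As Bs hUs hAsW hBsW hWs
    refine ⟨Cs, ⟨As, hAs, Bs, hBs, hCrel⟩, ?_, ?_⟩
    · exact hCmin C1 (ax.mono As Bs A1 B1 C1 hrel1
        (ax.cle_trans _ _ _ hAsA hAA1) (ax.cle_trans _ _ _ hBsB hBB1))
    · exact hCmin C2 (ax.mono As Bs A2 B2 C2 hrel2
        (ax.cle_trans _ _ _ hAsA hAA2) (ax.cle_trans _ _ _ hBsB hBB2))
  · intro T hT
    obtain ⟨B0, hB0, hB0T⟩ := hy.lc_mem T hT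
    obtain ⟨V0, hV0⟩ := ax.exists_rc B0
    obtain ⟨W, hW, hWV0, hWT, -⟩ := ax.meet V0 T hV0.1 hT
    obtain ⟨Bs, hBs, hBsW⟩ := hy.rc_mem W hW
    have hBsB0 : cle c Bs B0 := rc_coh ax hy hB0 hBs hV0 hBsW hWV0
    obtain ⟨T'', hT''⟩ := ax.exists_lc Bs
    have hT''T : sle c T'' T :=
      (ax.lc_sub_iff T'' T B0 hT''.1 hT hB0T).mpr ⟨Bs, hT'', hBsB0⟩
    obtain ⟨As, hAs, hAsW⟩ := hx.lc_mem W hW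
    obtain ⟨Us, hUs⟩ := ax.exists_rc As
    obtain ⟨Cs, -, hCsLC, hCrel, -⟩ := ax.prod_exists Us W T'' As Bs hUs hAsW hBsW hT''
    obtain ⟨Cf, hCf, hCsCf⟩ := ax.lc_up T'' T Cs hT''.1 hT hT''T hCsLC
    exact ⟨Cf, ⟨As, hAs, Bs, hBs, rel_up ax nax hCrel hCsCf⟩, hCf⟩
  · intro T hT
    obtain ⟨A0, hA0, hA0T⟩ := hx.rc_mem T hT
    obtain ⟨V0, hV0⟩ := ax.exists_lc A0
    obtain ⟨W, hW, hWV0, hWT, -⟩ := ax.meet V0 T hV0.1 hT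
    obtain ⟨As, hAs, hAsW⟩ := hx.lc_mem W hW
    have hAsA0 : cle c As A0 := lc_coh ax hx hA0 hAs hV0 hAsW hWV0
    obtain ⟨S'', hS''⟩ := ax.exists_rc As
    have hS''T : sle c S'' T :=
      (ax.rc_sub_iff S'' T A0 hS''.1 hT hA0T).mpr ⟨As, hS'', hAsA0⟩
    obtain ⟨Bs, hBs, hBsW⟩ := hy.rc_mem W hW
    obtain ⟨Ws, hWs⟩ := ax.exists_lc Bs
    obtain ⟨Cs, hCsRC, -, hCrel, -⟩ := ax.prod_exists S'' W Ws As Bs hS'' hAsW hBsW hWs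
    obtain ⟨Cf, hCf, hCsCf⟩ := ax.rc_up S'' T Cs hS''.1 hT hS''T hCsRC
    exact ⟨Cf, ⟨As, hAs, Bs, hBs, rel_up ax nax hCrel hCsCf⟩, hCf⟩

lemma finv_full (ax : Axioms c) {x : Set M} (hx : FullFilter c x) :
    FullFilter c (finv c x) := by
  constructor
  · rintro B ⟨A, hA, hS⟩ B' hBB'
    have hBA : B = dia ax A := dia_eq ax hS
    have : cle c (dia ax B) (dia ax B') := dia_cle ax hBB'
    rw [hBA, dia_dia ax A] at this
    exact ⟨dia ax B', hx.up A hA _ this, srel_dia' ax B'⟩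
  · rintro B1 ⟨A1, hA1, hS1⟩ B2 ⟨A2, hA2, hS2⟩
    obtain ⟨D, hD, hDA1, hDA2⟩ := hx.directed A1 hA1 A2 hA2
    refine ⟨dia ax D, ⟨D, hD, srel_dia ax D⟩, ?_, ?_⟩
    · rw [dia_eq ax hS1]; exact dia_cle ax hDA1
    · rw [dia_eq ax hS2]; exact dia_cle ax hDA2
  · intro U hU
    obtain ⟨A, hA, hRA⟩ := hx.rc_mem U hU
    exact ⟨dia ax A, ⟨A, hA, srel_dia ax A⟩, dia_lc ax hRA⟩
  · intro U hU
    obtain ⟨A, hA, hLA⟩ := hx.lc_mem U hU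
    exact ⟨dia ax A, ⟨A, hA, srel_dia ax A⟩, dia_rc ax hLA⟩

lemma fone_mul (ax : Axioms c) (nax : NegAx c) {x : Set M} (hx : FullFilter c x) :
    fprod c (fone c) x = x := by
  apply Set.eq_of_subset_of_subset
  · rintro C ⟨E, ⟨W, hW, hWE⟩, B, hB, hrel⟩
    have hrelW : c.rel W B C := ax.mono W B E B C hrel hWE (ax.cle_refl B)
    obtain ⟨VB, hVB⟩ := ax.exists_rc B
    obtain ⟨W', hW', hW'W, hW'VB, -⟩ := ax.meet W VB hW hVB.1
    obtain ⟨R, hR, hRW'⟩ := hx.rc_mem W' hW'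
    have hRB : cle c R B := rc_coh ax hx hB hR hVB hRW' hW'VB
    have hrelW' : c.rel W' R C := ax.mono W' R W B C hrelW
      ((ax.cle_ext W' W hW' hW).mpr hW'W) hRB
    have hRC : cle c R C := by
      rw [nax.le_iff]
      rintro ⟨D, hDR, hdisj⟩
      obtain ⟨SD, hSD⟩ := ax.exists_rc D
      have hSDW' : sle c SD W' :=
        (ax.rc_sub_iff SD W' R hSD.1 hW' hRW').mpr ⟨D, hSD, hDR⟩
      exact hdisj ⟨SD, D,
        ax.mono SD D W' R C hrelW' ((ax.cle_ext SD W' hSD.1 hW').mpr hSDW') hDR,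
        hSD.2.1⟩
    exact hx.up R hR C hRC
  · intro A hA
    obtain ⟨VA, hVA⟩ := ax.exists_rc A
    exact ⟨VA, ⟨VA, hVA.1, ax.cle_refl VA⟩, A, hA, hVA.2.1⟩

lemma fmul_one (ax : Axioms c) (nax : NegAx c) {x : Set M} (hx : FullFilter c x) :
    fprod c x (fone c) = x := by
  apply Set.eq_of_subset_of_subset
  · rintro C ⟨B, hB, E, ⟨W, hW, hWE⟩, hrel⟩
    have hrelW : c.rel B W C := ax.mono B W B E C hrel (ax.cle_refl B) hWE
    obtain ⟨VB, hVB⟩ := ax.exists_lc B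
    obtain ⟨W', hW', hW'VB, hW'W, -⟩ := ax.meet VB W hVB.1 hW
    obtain ⟨R, hR, hRW'⟩ := hx.lc_mem W' hW'
    have hRB : cle c R B := lc_coh ax hx hB hR hVB hRW' hW'VB
    have hrelW' : c.rel R W' C := ax.mono R W' B W C hrelW hRB
      ((ax.cle_ext W' W hW' hW).mpr hW'W)
    have hRC : cle c R C := by
      rw [nax.le_iff]
      rintro ⟨D, hDR, hdisj⟩
      obtain ⟨TD, hTD⟩ := ax.exists_lc D
      have hTDW' : sle c TD W' :=
        (ax.lc_sub_iff TD W' R hTD.1 hW' hRW').mpr ⟨D, hTD, hDR⟩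
      exact hdisj ⟨D, TD,
        ax.mono D TD R W' C hrelW' hDR ((ax.cle_ext TD W' hTD.1 hW').mpr hTDW'),
        hTD.2.1⟩
    exact hx.up R hR C hRC
  · intro A hA
    obtain ⟨TA, hTA⟩ := ax.exists_lc A
    exact ⟨A, hA, TA, ⟨TA, hTA.1, ax.cle_refl TA⟩, hTA.2.1⟩

lemma finv_mul (ax : Axioms c) (nax : NegAx c) {x : Set M} (hx : FullFilter c x) :
    fprod c (finv c x) x = fone c := by
  apply Set.eq_of_subset_of_subset
  · rintro C ⟨B1, ⟨A, hA, hS⟩, B2, hB2, hrel⟩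
    obtain ⟨D, hD, hDA, hDB2⟩ := hx.directed A hA B2 hB2
    have hrelD : c.rel (dia ax D) D C := by
      refine ax.mono (dia ax D) D B1 B2 C hrel ?_ hDB2
      rw [dia_eq ax hS]; exact dia_cle ax hDA
    obtain ⟨TD, hTD⟩ := ax.exists_lc D
    obtain ⟨SD, hSD⟩ := ax.exists_rc D
    obtain ⟨Cs, hCsRC, -, -, hCmin⟩ := ax.prod_exists TD SD TD (dia ax D) D
      (dia_rc ax hTD) (dia_lc ax hSD) hSD hTD
    have hCsTD : cle c Cs TD := hCmin TD (rel_dia' ax hTD)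
    have hCsC : cle c Cs C := hCmin C hrelD
    exact ⟨Cs, isSub_of_rc_cle ax nax hCsRC hCsTD, hCsC⟩
  · rintro C ⟨W, hW, hWC⟩
    obtain ⟨A, hA, hLA⟩ := hx.lc_mem W hW
    exact ⟨dia ax A, ⟨A, hA, srel_dia ax A⟩, A, hA,
      rel_up ax nax (rel_dia' ax hLA) hWC⟩

lemma fmul_inv (ax : Axioms c) (nax : NegAx c) {x : Set M} (hx : FullFilter c x) :
    fprod c x (finv c x) = fone c := by
  apply Set.eq_of_subset_of_subset
  · rintro C ⟨B1, hB1, B2, ⟨A, hA, hS⟩, hrel⟩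
    obtain ⟨D, hD, hDB1, hDA⟩ := hx.directed B1 hB1 A hA
    have hrelD : c.rel D (dia ax D) C := by
      refine ax.mono D (dia ax D) B1 B2 C hrel hDB1 ?_
      rw [dia_eq ax hS]; exact dia_cle ax hDA
    obtain ⟨TD, hTD⟩ := ax.exists_lc D
    obtain ⟨SD, hSD⟩ := ax.exists_rc D
    obtain ⟨Cs, hCsRC, -, -, hCmin⟩ := ax.prod_exists SD TD SD D (dia ax D)
      hSD hTD (dia_rc ax hTD) (dia_lc ax hSD)
    have hCsSD : cle c Cs SD := hCmin SD (rel_dia ax hSD)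
    have hCsC : cle c Cs C := hCmin C hrelD
    exact ⟨Cs, isSub_of_rc_cle ax nax hCsRC hCsSD, hCsC⟩
  · rintro C ⟨W, hW, hWC⟩
    obtain ⟨A, hA, hRA⟩ := hx.rc_mem W hW
    exact ⟨A, hA, dia ax A, ⟨A, hA, srel_dia ax A⟩,
      rel_up ax nax (rel_dia ax hRA) hWC⟩

end Aux3

section Aux4

variable {c : CG M} [Countable M]

variable (c) in
@[reducible] noncomputable def FFmul (ax : Axioms c) (nax : NegAx c) : Mul (FF c) :=
  ⟨fun x y => ⟨fprod c x.1 y.1, fprod_full ax nax x.2 y.2⟩⟩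

variable (c) in
@[reducible] noncomputable def FFone (ax : Axioms c) (nax : NegAx c) : One (FF c) :=
  ⟨⟨fone c, fone_full ax nax⟩⟩

variable (c) in
@[reducible] noncomputable def FFinv (ax : Axioms c) : Inv (FF c) :=
  ⟨fun x => ⟨finv c x.1, finv_full ax x.2⟩⟩

variable (c) in
noncomputable def FFgroup (ax : Axioms c) (nax : NegAx c) (hassoc : FAssoc c) :
    Group (FF c) :=
  letI := FFmul c ax nax
  letI := FFone c ax nax
  letI := FFinv c ax
  Group.ofLeftAxioms
    (fun a b d => Subtype.ext (hassoc a.1 b.1 d.1 a.2 b.2 d.2))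
    (fun a => Subtype.ext (fone_mul ax nax a.2))
    (fun a => Subtype.ext (finv_mul ax nax a.2))

example (ax : Axioms c) (nax : NegAx c) (hassoc : FAssoc c) (x y : FF c) : True := by
  letI := FFgroup c ax nax hassoc
  have h1 : (x * y).1 = fprod c x.1 y.1 := rfl
  have h2 : (x⁻¹).1 = finv c x.1 := rfl
  have h3 : (1 : FF c).1 = fone c := rfl
  trivial

end Aux4

section Backward

set_option linter.unusedSectionVars false

variable {c : CG M} [Countable M]

lemma closed_imp_bool (A B : M) : IsClosed {f : M → Bool | f A = true → f B = true} := by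
  have : {f : M → Bool | f A = true → f B = true} =
      (fun f : M → Bool => f A) ⁻¹' {false} ∪ (fun f : M → Bool => f B) ⁻¹' {true} := by
    ext f
    rcases Bool.dichotomy (f A) with h | h <;> rcases Bool.dichotomy (f B) with h' | h' <;>
      simp [h, h']
  rw [this]
  exact ((isClosed_discrete _).preimage (continuous_apply A)).union
    ((isClosed_discrete _).preimage (continuous_apply B))

lemma closed_notand_bool (A B : M) :
    IsClosed {f : M → Bool | ¬ (f A = true ∧ f B = true)} := by
  have : {f : M → Bool | ¬ (f A = true ∧ f B = true)} =
      (fun f : M → Bool => f A) ⁻¹' {false} ∪ (fun f : M → Bool => f B) ⁻¹' {false} := by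
    ext f
    rcases Bool.dichotomy (f A) with h | h <;> rcases Bool.dichotomy (f B) with h' | h' <;>
      simp [h, h']
  rw [this]
  exact ((isClosed_discrete _).preimage (continuous_apply A)).union
    ((isClosed_discrete _).preimage (continuous_apply B))

lemma compact_of_conditions (ax : Axioms c)
    (hnorm : ∀ U, IsSub c U → ∃ V, IsSub c V ∧ sle c V U ∧ ∀ A, (LC c V A ↔ RC c V A))
    (hfin : ∀ U, IsSub c U → {A | LC c U A}.Finite) :
    @CompactSpace (FF c) (ffTop c) := by
  classical
  letI : TopologicalSpace (FF c) := ffTop c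
  -- the closed set of "coherent characteristic functions"
  set CS : Set (M → Bool) :=
    {f | (∀ A B, cle c A B → f A = true → f B = true) ∧
         (∀ U, IsSub c U → ∃ A, LC c U A ∧ f A = true) ∧
         (∀ W U C A, IsSub c W → IsSub c U → sle c W U → LC c W C → LC c U A →
            ¬ cle c C A → ¬ (f C = true ∧ f A = true))} with hCS
  have hclosed : IsClosed CS := by
    have h1 : IsClosed {f : M → Bool | ∀ A B, cle c A B → f A = true → f B = true} := by
      have : {f : M → Bool | ∀ A B, cle c A B → f A = true → f B = true} =
          ⋂ (A) (B) (_ : cle c A B), {f : M → Bool | f A = true → f B = true} := by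
        ext f; simp only [Set.mem_setOf_eq, Set.mem_iInter]
      rw [this]
      exact isClosed_iInter fun A => isClosed_iInter fun B =>
        isClosed_iInter fun _ => closed_imp_bool A B
    have h2 : IsClosed {f : M → Bool | ∀ U, IsSub c U → ∃ A, LC c U A ∧ f A = true} := by
      have : {f : M → Bool | ∀ U, IsSub c U → ∃ A, LC c U A ∧ f A = true} =
          ⋂ (U) (_ : IsSub c U), ⋃ A ∈ {A | LC c U A}, {f : M → Bool | f A = true} := by
        ext f; simp only [Set.mem_setOf_eq, Set.mem_iInter, Set.mem_iUnion]
        constructor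
        · intro h U hU; obtain ⟨A, hA, hfA⟩ := h U hU; exact ⟨A, hA, hfA⟩
        · intro h U hU; obtain ⟨A, hA, hfA⟩ := h U hU; exact ⟨A, hA, hfA⟩
      rw [this]
      refine isClosed_iInter fun U => isClosed_iInter fun hU => ?_
      refine Set.Finite.isClosed_biUnion (hfin U hU) fun A _ => ?_
      exact isClosed_eq (continuous_apply A) continuous_const
    have h3 : IsClosed {f : M → Bool | ∀ W U C A, IsSub c W → IsSub c U → sle c W U →
        LC c W C → LC c U A → ¬ cle c C A → ¬ (f C = true ∧ f A = true)} := by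
      have : {f : M → Bool | ∀ W U C A, IsSub c W → IsSub c U → sle c W U →
          LC c W C → LC c U A → ¬ cle c C A → ¬ (f C = true ∧ f A = true)} =
          ⋂ (W) (U) (C) (A) (_ : IsSub c W) (_ : IsSub c U) (_ : sle c W U)
            (_ : LC c W C) (_ : LC c U A) (_ : ¬ cle c C A),
            {f : M → Bool | ¬ (f C = true ∧ f A = true)} := by
        ext f; simp only [Set.mem_setOf_eq, Set.mem_iInter]
      rw [this]
      exact isClosed_iInter fun W => isClosed_iInter fun U => isClosed_iInter fun C =>
        isClosed_iInter fun A => isClosed_iInter fun _ => isClosed_iInter fun _ =>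
        isClosed_iInter fun _ => isClosed_iInter fun _ => isClosed_iInter fun _ =>
        isClosed_iInter fun _ => closed_notand_bool C A
    have : CS = _ ∩ (_ ∩ _) := rfl
    exact (h1.inter (h2.inter h3) : _)
  -- from a coherent function to a full filter
  have toFull : ∀ f ∈ CS, FullFilter c {A | f A = true} := by
    intro f hf
    obtain ⟨hf1, hf2, hf3⟩ := hf
    constructor
    · intro A hA B hAB; exact hf1 A B hAB hA
    · intro A hA B hB
      obtain ⟨UA, hUA⟩ := ax.exists_lc A
      obtain ⟨UB, hUB⟩ := ax.exists_lc B
      obtain ⟨W, hW, hWA, hWB, -⟩ := ax.meet UA UB hUA.1 hUB.1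
      obtain ⟨C, hC, hCf⟩ := hf2 W hW
      refine ⟨C, hCf, ?_, ?_⟩
      · by_contra h
        exact hf3 W UA C A hW hUA.1 hWA hC hUA h ⟨hCf, hA⟩
      · by_contra h
        exact hf3 W UB C B hW hUB.1 hWB hC hUB h ⟨hCf, hB⟩
    · intro U hU
      obtain ⟨A, hA, hAf⟩ := hf2 U hU
      exact ⟨A, hAf, hA⟩
    · intro U hU
      obtain ⟨V, hV, hVU, hlr⟩ := hnorm U hU
      obtain ⟨A, hA, hAf⟩ := hf2 V hV
      obtain ⟨B, hB, hAB⟩ := ax.rc_up V U A hV hU hVU ((hlr A).mp hA)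
      exact ⟨B, hf1 A B hAB hAf, hB⟩
  -- CS is compact
  have hCScomp : IsCompact CS := hclosed.isCompact
  haveI : CompactSpace CS := isCompact_iff_compactSpace.mp hCScomp
  -- the projection to `F(M)`
  let ψ : CS → FF c := fun p => ⟨{A | p.1 A = true}, toFull p.1 p.2⟩
  have hcont : Continuous ψ := by
    refine continuous_generateFrom_iff.mpr ?_
    rintro s ⟨A, rfl⟩
    have : ψ ⁻¹' {x : FF c | A ∈ x.1} =
        Subtype.val ⁻¹' ((fun f : M → Bool => f A) ⁻¹' {true}) := rfl
    rw [this]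
    exact (continuous_subtype_val.comp continuous_id).isOpen_preimage _
      ((isOpen_discrete _).preimage (continuous_apply A))
  have hsurj : Function.Surjective ψ := by
    intro x
    have hmem : (fun A => if A ∈ x.1 then true else false) ∈ CS := by
      refine ⟨?_, ?_, ?_⟩
      · intro A B hAB hA
        by_cases h : A ∈ x.1
        · simp [x.2.up A h B hAB]
        · simp [h] at hA
      · intro U hU
        obtain ⟨A, hA, hLA⟩ := x.2.lc_mem U hU
        exact ⟨A, hLA, by simp [hA]⟩
      · intro W U C A hW hU hWU hC hA hne h
        by_cases hCx : C ∈ x.1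
        · by_cases hAx : A ∈ x.1
          · exact hne (lc_coh ax x.2 hAx hCx hA hC hWU)
          · simp [hAx] at h
        · simp [hCx] at h
    refine ⟨⟨_, hmem⟩, ?_⟩
    apply Subtype.ext
    ext A
    simp only [ψ, Set.mem_setOf_eq]
    by_cases h : A ∈ x.1 <;> simp [h]
  constructor
  have : (Set.univ : Set (FF c)) = ψ '' Set.univ := by
    rw [Set.image_univ]
    exact (Set.range_eq_univ.mpr hsurj).symm
  rw [this]
  exact isCompact_univ.image hcont

end Backward

section ForwardB

set_option linter.unusedSectionVars false

variable {c : CG M} [Countable M]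

lemma hat_open (A : M) : @IsOpen (FF c) (ffTop c) {x : FF c | A ∈ x.1} :=
  TopologicalSpace.isOpen_generateFrom_of_mem ⟨A, rfl⟩

lemma finite_lc_of_compact (ax : Axioms c) (hc : @CompactSpace (FF c) (ffTop c)) :
    ∀ U, IsSub c U → {A | LC c U A}.Finite := by
  letI : TopologicalSpace (FF c) := ffTop c
  intro U hU
  have hcover : (Set.univ : Set (FF c)) ⊆
      ⋃ i : {A : M // LC c U A}, {x : FF c | i.1 ∈ x.1} := by
    intro x _
    obtain ⟨A, hA, hLA⟩ := x.2.lc_mem U hU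
    exact Set.mem_iUnion.mpr ⟨⟨A, hLA⟩, hA⟩
  obtain ⟨t, ht⟩ := isCompact_univ.elim_finite_subcover
    (fun i : {A : M // LC c U A} => {x : FF c | i.1 ∈ x.1}) (fun i => hat_open i.1) hcover
  refine Set.Finite.subset (t.finite_toSet.image fun i => i.1) ?_
  intro A hA
  obtain ⟨x, hx, hAx⟩ := exists_fullFilter ax A
  obtain ⟨i, hit, hix⟩ := Set.mem_iUnion₂.mp (ht (Set.mem_univ (⟨x, hx⟩ : FF c)))
  have : A = i.1 := lc_mem_unique ax hx hAx hix hA i.2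
  exact ⟨i, hit, this.symm⟩

end ForwardB

section ForwardA

set_option linter.unusedSectionVars false
set_option maxHeartbeats 1000000

variable {c : CG M} [Countable M]

lemma exists_sub_of_finite_hats (ax : Axioms c) {U : M} (hU : IsSub c U)
    (fs : Set (Set (FF c))) (hfin : fs.Finite) :
    (∀ s ∈ fs, ∃ A, s = {x : FF c | A ∈ x.1} ∧ ∃ W, IsSub c W ∧ cle c W A) →
    ∃ W, IsSub c W ∧ ∀ z : FF c, W ∈ z.1 → z ∈ ⋂₀ fs := by
  refine Set.Finite.induction_on fs hfin (fun _ => ⟨U, hU, fun z _ => by simp⟩) ?_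
  intro s fs' hnot hfs' ih hsub
  obtain ⟨W', hW', hW'prop⟩ := ih fun s' hs' => hsub s' (Set.mem_insert_of_mem _ hs')
  obtain ⟨A, hAeq, Ws, hWs, hWsA⟩ := hsub s (Set.mem_insert _ _)
  obtain ⟨W, hW, hWW', hWWs, -⟩ := ax.meet W' Ws hW' hWs
  refine ⟨W, hW, fun z hz => ?_⟩
  rw [Set.sInter_insert]
  constructor
  · rw [hAeq]
    exact z.2.up W hz A
      (ax.cle_trans _ _ _ ((ax.cle_ext W Ws hW hWs).mpr hWWs) hWsA)
  · exact hW'prop z (z.2.up W hz W' ((ax.cle_ext W W' hW hW').mpr hWW'))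

lemma normal_of_compact (ax : Axioms c) (nax : NegAx c) (crec : CosetRec c)
    (hassoc : FAssoc c) (hc : @CompactSpace (FF c) (ffTop c)) :
    ∀ U, IsSub c U → ∃ V, IsSub c V ∧ sle c V U ∧ ∀ A, (LC c V A ↔ RC c V A) := by
  classical
  letI : TopologicalSpace (FF c) := ffTop c
  letI : Group (FF c) := FFgroup c ax nax hassoc
  have hfin := finite_lc_of_compact ax hc
  intro U hU
  -- basic membership facts about the group operations
  have hmulv : ∀ x y : FF c, (x * y).1 = fprod c x.1 y.1 := fun _ _ => rfl
  have hinvv : ∀ x : FF c, (x⁻¹).1 = finv c x.1 := fun _ => rfl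
  have honev : (1 : FF c).1 = fone c := rfl
  -- Step A : the open subgroup H
  obtain ⟨CU, hCUsub, hCUlc, hCUrc, hCUle, hCUsrel⟩ := exists_idCoset ax nax hU
  set H : Set (FF c) := {z : FF c | CU ∈ z.1} with hH
  have hHone : (1 : FF c) ∈ H := ⟨CU, hCUsub, ax.cle_refl CU⟩
  have hHmul : ∀ x ∈ H, ∀ y ∈ H, x * y ∈ H := by
    intro x hx y hy
    exact ⟨CU, hx, CU, hy, hCUsub⟩
  have hHinv : ∀ x ∈ H, x⁻¹ ∈ H := by
    intro x hx
    exact ⟨CU, hx, hCUsrel⟩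
  -- Step B : finitely many right cosets of H cover the group
  have hRopen : ∀ g : FF c, IsOpen {z : FF c | z * g⁻¹ ∈ H} := by
    intro g
    have : {z : FF c | z * g⁻¹ ∈ H} =
        ⋃ (P) (_ : ∃ Q, Q ∈ (g⁻¹).1 ∧ c.rel P Q CU), {z : FF c | P ∈ z.1} := by
      ext z
      simp only [Set.mem_iUnion, Set.mem_setOf_eq]
      constructor
      · rintro ⟨P, hP, Q, hQ, hrel⟩
        exact ⟨P, ⟨Q, hQ, hrel⟩, hP⟩
      · rintro ⟨P, ⟨Q, hQ, hrel⟩, hP⟩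
        exact ⟨P, hP, Q, hQ, hrel⟩
    rw [this]
    exact isOpen_iUnion fun P => isOpen_iUnion fun _ => hat_open P
  have hcover : (Set.univ : Set (FF c)) ⊆ ⋃ g : FF c, {z : FF c | z * g⁻¹ ∈ H} := by
    intro z _
    refine Set.mem_iUnion.mpr ⟨z, ?_⟩
    simp only [Set.mem_setOf_eq, mul_inv_cancel]
    exact hHone
  obtain ⟨t, ht⟩ := isCompact_univ.elim_finite_subcover _ hRopen hcover
  -- Step C : the open normal "core" N
  set N : Set (FF c) := {z : FF c | ∀ g : FF c, g * z * g⁻¹ ∈ H} with hN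
  have hNopen : IsOpen N := by
    have hNeq : N = ⋂ g ∈ t, {z : FF c | g * z * g⁻¹ ∈ H} := by
      apply Set.eq_of_subset_of_subset
      · intro z hz
        exact Set.mem_iInter₂.mpr fun g _ => hz g
      · intro z hz g
        obtain ⟨gi, hgi, hggi⟩ := Set.mem_iUnion₂.mp (ht (Set.mem_univ g))
        set h := g * gi⁻¹ with hh
        have hgeq : g = h * gi := by rw [hh]; group
        have : g * z * g⁻¹ = h * (gi * z * gi⁻¹) * h⁻¹ := by rw [hgeq]; group
        rw [this]
        exact hHmul _ (hHmul _ hggi _ (Set.mem_iInter₂.mp hz gi hgi)) _ (hHinv _ hggi)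
    rw [hNeq]
    refine isOpen_biInter_finset fun g _ => ?_
    have : {z : FF c | g * z * g⁻¹ ∈ H} =
        ⋃ (B) (_ : ∃ A P Q, A ∈ g.1 ∧ c.rel A B P ∧ Q ∈ (g⁻¹).1 ∧ c.rel P Q CU),
          {z : FF c | B ∈ z.1} := by
      ext z
      simp only [Set.mem_iUnion, Set.mem_setOf_eq]
      constructor
      · rintro ⟨P, ⟨A, hA, B, hB, hrel1⟩, Q, hQ, hrel2⟩
        exact ⟨B, ⟨A, P, Q, hA, hrel1, hQ, hrel2⟩, hB⟩
      · rintro ⟨B, ⟨A, P, Q, hA, hrel1, hQ, hrel2⟩, hB⟩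
        exact ⟨P, ⟨A, hA, B, hB, hrel1⟩, Q, hQ, hrel2⟩
    rw [this]
    exact isOpen_iUnion fun B => isOpen_iUnion fun _ => hat_open B
  have hNone : (1 : FF c) ∈ N := by
    intro g
    have : g * 1 * g⁻¹ = (1 : FF c) := by group
    rw [this]; exact hHone
  have hNmul : ∀ z1 ∈ N, ∀ z2 ∈ N, z1 * z2 ∈ N := by
    intro z1 h1 z2 h2 g
    have : g * (z1 * z2) * g⁻¹ = (g * z1 * g⁻¹) * (g * z2 * g⁻¹) := by group
    rw [this]
    exact hHmul _ (h1 g) _ (h2 g)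
  have hNinv : ∀ z ∈ N, z⁻¹ ∈ N := by
    intro z hz g
    have : g * z⁻¹ * g⁻¹ = (g * z * g⁻¹)⁻¹ := by group
    rw [this]
    exact hHinv _ (hz g)
  have hNnormal : ∀ z ∈ N, ∀ g : FF c, g * z * g⁻¹ ∈ N := by
    intro z hz g g'
    have : g' * (g * z * g⁻¹) * g'⁻¹ = (g' * g) * z * (g' * g)⁻¹ := by group
    rw [this]
    exact hz (g' * g)
  have hNH : N ⊆ H := by
    intro z hz
    have := hz 1
    have heq : (1 : FF c) * z * 1⁻¹ = z := by group
    rwa [heq] at this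
  -- Step D : a small subgroup K with hat K ⊆ N
  obtain ⟨v, ⟨fs, ⟨hfsfin, hfssub⟩, hveq⟩, h1v, hvN⟩ :=
    (TopologicalSpace.isTopologicalBasis_of_subbasis rfl).exists_subset_of_mem_open
      hNone hNopen
  have hWex : ∃ W, IsSub c W ∧ ∀ z : FF c, W ∈ z.1 → z ∈ ⋂₀ fs := by
    refine exists_sub_of_finite_hats ax hU fs hfsfin fun s hs => ?_
    obtain ⟨A, hA⟩ := hfssub hs
    refine ⟨A, hA, ?_⟩
    have h1s : (1 : FF c) ∈ s := by
      have h1fs := h1v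
      rw [← hveq] at h1fs
      exact h1fs s hs
    rw [hA] at h1s
    exact h1s
  obtain ⟨W, hW, hWprop⟩ := hWex
  obtain ⟨K, hKsub, hKlcW, hKrcW, hKleW, hKsrel⟩ := exists_idCoset ax nax hW
  have hKN : ∀ z : FF c, K ∈ z.1 → z ∈ N := by
    intro z hz
    apply hvN
    rw [← hveq]
    exact hWprop z (z.2.up K hz W hKleW)
  -- Step E : the finitely many K-cosets meeting N
  set P : Set M := {A | LC c K A ∧ ∃ z : FF c, z ∈ N ∧ A ∈ z.1} with hP
  have hPfin : P.Finite := (hfin K hKsub).subset fun A hA => hA.1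
  have hPne : P.Nonempty := by
    obtain ⟨A0, hA0mem, hA0⟩ := (fone_full ax nax).lc_mem K hKsub
    exact ⟨A0, hA0, ⟨1, hNone, hA0mem⟩⟩
  set sP := hPfin.toFinset with hsP
  have hsPne : sP.Nonempty := by rwa [hsP, Set.Finite.toFinset_nonempty]
  set n := sP.card with hnd
  have hn1 : 1 ≤ n := Finset.card_pos.mpr hsPne
  set Af : Fin n → M := fun i => (sP.equivFin.symm i).1 with hAfd
  have hAfP : ∀ i, Af i ∈ P := fun i => hPfin.mem_toFinset.mp (sP.equivFin.symm i).2
  have hAfsurj : ∀ A ∈ P, ∃ i, Af i = A := by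
    intro A hA
    refine ⟨sP.equivFin ⟨A, hPfin.mem_toFinset.mpr hA⟩, ?_⟩
    simp [hAfd]
  have hAflc : ∀ i, LC c K (Af i) := fun i => (hAfP i).1
  -- Step F : the union of double cosets equals N
  have hDU : doubleUnion c K Af = {p | ∃ z : FF c, z ∈ N ∧ p = z.1} := by
    apply Set.eq_of_subset_of_subset
    · rintro p ⟨i, u, v, hu, hv, hKu, hAv, rfl⟩
      obtain ⟨-, zi, hziN, hAizi⟩ := hAfP i
      set uF : FF c := ⟨u, hu⟩ with huF
      set vF : FF c := ⟨v, hv⟩ with hvFd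
      have hw : K ∈ (zi⁻¹ * vF).1 := by
        exact ⟨dia ax (Af i), ⟨Af i, hAizi, srel_dia ax (Af i)⟩, Af i, hAv,
          rel_dia' ax (hAflc i)⟩
      have hvFeq : vF = zi * (zi⁻¹ * vF) := by group
      have hvFN : vF ∈ N := by
        rw [hvFeq]
        exact hNmul _ hziN _ (hKN _ hw)
      exact ⟨uF * vF, hNmul _ (hKN uF hKu) _ hvFN, rfl⟩
    · rintro p ⟨z, hzN, rfl⟩
      obtain ⟨B, hBz, hBlc⟩ := z.2.lc_mem K hKsub
      obtain ⟨i, hi⟩ := hAfsurj B ⟨hBlc, z, hzN, hBz⟩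
      refine ⟨i, fone c, z.1, fone_full ax nax, z.2, ⟨K, hKsub, ax.cle_refl K⟩, ?_, ?_⟩
      · rw [hi]; exact hBz
      · exact (fone_mul ax nax z.2).symm
  -- Step G : coset recognition
  have hsubgrp : fone c ∈ doubleUnion c K Af ∧
      (∀ p ∈ doubleUnion c K Af, ∀ q ∈ doubleUnion c K Af,
        fprod c p q ∈ doubleUnion c K Af) ∧
      (∀ p ∈ doubleUnion c K Af, finv c p ∈ doubleUnion c K Af) := by
    rw [hDU]
    refine ⟨⟨1, hNone, rfl⟩, ?_, ?_⟩
    · rintro p ⟨z1, h1, rfl⟩ q ⟨z2, h2, rfl⟩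
      exact ⟨z1 * z2, hNmul _ h1 _ h2, rfl⟩
    · rintro p ⟨z, hz, rfl⟩
      exact ⟨z⁻¹, hNinv _ hz, rfl⟩
  obtain ⟨V, hVsub, hVrel, hVhat⟩ := crec K hKsub n hn1 Af hAflc hsubgrp
  have hatV_N : ∀ z : FF c, V ∈ z.1 → z ∈ N := by
    intro z hz
    have hmem := hVhat z.1 z.2 hz
    rw [hDU] at hmem
    obtain ⟨z', hz'N, hzz'⟩ := hmem
    have : z = z' := Subtype.ext hzz'
    rw [this]
    exact hz'N
  have hN_hatV : ∀ z : FF c, z ∈ N → V ∈ z.1 := by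
    intro z hzN
    obtain ⟨B, hBz, hBlc⟩ := z.2.lc_mem K hKsub
    obtain ⟨i, hi⟩ := hAfsurj B ⟨hBlc, z, hzN, hBz⟩
    obtain ⟨R, hRz, hRrc⟩ := z.2.rc_mem K hKsub
    obtain ⟨D, hDz, hDB, hDR⟩ := z.2.directed B hBz R hRz
    obtain ⟨SD, hSD⟩ := ax.exists_rc D
    have hSDK : sle c SD K := (ax.rc_sub_iff SD K R hSD.1 hKsub hRrc).mpr ⟨D, hSD, hDR⟩
    have hrelSDV : c.rel SD D V := by
      have hKi := hVrel i
      rw [hi] at hKi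
      exact ax.mono SD D K B V hKi ((ax.cle_ext SD K hSD.1 hKsub).mpr hSDK) hDB
    have hDV : cle c D V := by
      rw [nax.le_iff]
      rintro ⟨C0, hC0D, hdisj⟩
      obtain ⟨SC, hSC⟩ := ax.exists_rc C0
      have hSCSD : sle c SC SD := (ax.rc_sub_iff SC SD D hSC.1 hSD.1 hSD).mpr ⟨C0, hSC, hC0D⟩
      exact hdisj ⟨SC, C0,
        ax.mono SC C0 SD D V hrelSDV ((ax.cle_ext SC SD hSC.1 hSD.1).mpr hSCSD) hC0D,
        hSC.2.1⟩
    exact z.2.up D hDz V hDV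
  have hVU : sle c V U := by
    refine sle_of_hat_subset ax nax hVsub hU ?_
    intro x hx hVx
    have hzN : (⟨x, hx⟩ : FF c) ∈ N := hatV_N ⟨x, hx⟩ hVx
    have hzH : (⟨x, hx⟩ : FF c) ∈ H := hNH hzN
    exact hx.up CU hzH U hCUle
  refine ⟨V, hVsub, hVU, ?_⟩
  intro A'
  constructor
  · intro hLA'
    obtain ⟨T, hT⟩ := ax.exists_rc A'
    obtain ⟨xs, hxs, hA'x⟩ := exists_fullFilter ax A'
    set xF : FF c := ⟨xs, hxs⟩ with hxF
    have hdia_lcT : LC c T (dia ax A') := dia_lc ax hT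
    have hdiainv : dia ax A' ∈ (xF⁻¹).1 := ⟨A', hA'x, srel_dia ax A'⟩
    have hTN : ∀ y : FF c, T ∈ y.1 → y ∈ N := by
      intro y hTy
      have hVw : V ∈ ((xF⁻¹ * y) * xF).1 :=
        ⟨dia ax A', ⟨dia ax A', hdiainv, T, hTy, hdia_lcT.2.1⟩, A', hA'x,
          rel_dia' ax hLA'⟩
      have hwN : (xF⁻¹ * y) * xF ∈ N := hatV_N _ hVw
      have hy : y = xF * ((xF⁻¹ * y) * xF) * xF⁻¹ := by group
      rw [hy]
      exact hNnormal _ hwN xF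
    have hVT' : ∀ y : FF c, V ∈ y.1 → T ∈ y.1 := by
      intro y hVy
      have hyN : y ∈ N := hatV_N y hVy
      have hwN : (xF⁻¹ * y) * xF ∈ N := by
        have h2 := hNnormal y hyN xF⁻¹
        rwa [inv_inv] at h2
      have hVw : V ∈ ((xF⁻¹ * y) * xF).1 := hN_hatV _ hwN
      have hy : y = (xF * ((xF⁻¹ * y) * xF)) * xF⁻¹ := by group
      rw [hy]
      exact ⟨A', ⟨A', hA'x, V, hVw, hLA'.2.1⟩, dia ax A', hdiainv, rel_dia ax hT⟩
    have hTV : sle c T V := by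
      refine sle_of_hat_subset ax nax hT.1 hVsub ?_
      intro x' hx' hTx'
      exact hN_hatV ⟨x', hx'⟩ (hTN ⟨x', hx'⟩ hTx')
    have hVT : sle c V T := by
      refine sle_of_hat_subset ax nax hVsub hT.1 ?_
      intro x' hx' hVx'
      exact hVT' ⟨x', hx'⟩ hVx'
    have hTVeq : T = V := ax.sle_antisymm T V hT.1 hVsub hTV hVT
    rwa [hTVeq] at hT
  · intro hRA'
    obtain ⟨T, hT⟩ := ax.exists_lc A'
    obtain ⟨xs, hxs, hA'x⟩ := exists_fullFilter ax A'
    set xF : FF c := ⟨xs, hxs⟩ with hxF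
    have hdia_lcV : LC c V (dia ax A') := dia_lc ax hRA'
    have hdiainv : dia ax A' ∈ (xF⁻¹).1 := ⟨A', hA'x, srel_dia ax A'⟩
    have hTN : ∀ y : FF c, T ∈ y.1 → y ∈ N := by
      intro y hTy
      have hVw : V ∈ ((xF * y) * xF⁻¹).1 :=
        ⟨A', ⟨A', hA'x, T, hTy, hT.2.1⟩, dia ax A', hdiainv, rel_dia ax hRA'⟩
      have hwN : (xF * y) * xF⁻¹ ∈ N := hatV_N _ hVw
      have hy : y = xF⁻¹ * ((xF * y) * xF⁻¹) * xF := by group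
      rw [hy]
      have h2 := hNnormal _ hwN xF⁻¹
      rwa [inv_inv] at h2
    have hVT' : ∀ y : FF c, V ∈ y.1 → T ∈ y.1 := by
      intro y hVy
      have hyN : y ∈ N := hatV_N y hVy
      have hwN : (xF * y) * xF⁻¹ ∈ N := hNnormal y hyN xF
      have hVw : V ∈ ((xF * y) * xF⁻¹).1 := hN_hatV _ hwN
      have hy : y = (xF⁻¹ * ((xF * y) * xF⁻¹)) * xF := by group
      rw [hy]
      exact ⟨dia ax A', ⟨dia ax A', hdiainv, V, hVw, hdia_lcV.2.1⟩, A', hA'x,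
        rel_dia' ax hT⟩
    have hTV : sle c T V := by
      refine sle_of_hat_subset ax nax hT.1 hVsub ?_
      intro x' hx' hTx'
      exact hN_hatV ⟨x', hx'⟩ (hTN ⟨x', hx'⟩ hTx')
    have hVT : sle c V T := by
      refine sle_of_hat_subset ax nax hVsub hT.1 ?_
      intro x' hx' hVx'
      exact hVT' ⟨x', hx'⟩ hVx'
    have hTVeq : T = V := ax.sle_antisymm T V hT.1 hVsub hTV hVT
    rwa [hTVeq] at hT

end ForwardA


/-- `F(M)` is compact iff every *subgroup contains a normal *subgroup and
every *subgroup has only finitely many left *cosets. -/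
theorem stmt15 (c : CG M) [Countable M] (ax : Axioms c) (nax : NegAx c) (crec : CosetRec c)
    (hassoc : FAssoc c) :
    @CompactSpace (FF c) (ffTop c) ↔
      ((∀ U, IsSub c U → ∃ V, IsSub c V ∧ sle c V U ∧ ∀ A, (LC c V A ↔ RC c V A)) ∧
       (∀ U, IsSub c U → {A | LC c U A}.Finite)) := by
  constructor
  · intro hc
    exact ⟨normal_of_compact ax nax crec hassoc hc, finite_lc_of_compact ax hc⟩
  · rintro ⟨h1, h2⟩
    exact compact_of_conditions ax h1 h2

end CoarsePaper
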